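/- Let A be a commutative ring, C a field, s : A → C a ring homomorphism, and P• a bounded complex of finite free A-modules. Then dim_C H^i(P• ⊗_A C) is an upper semicontinuous function of s in the following sense: if dim_C H^i(P• ⊗_A C) ≤ r at s, then there is an element a ∈ A with s(a) ≠ 0 such that dim_{C'} H^i(P• ⊗_A C') ≤ r for every ring homomorphism s' : A → C' to a field with s'(a) ≠ 0. -/

import Mathlib

open TensorProduct

/-- The cohomology of a cochain complex `(C, d)` at the spot `j + 1`:
`ker (d (j+1)) / im (d j)`. -/
abbrev CohomologyAt {R : Type*} [CommRing R] {C : ℤ → Type*} [∀ i, AddCommGroup (C i)]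
    [∀ i, Module R (C i)] (d : ∀ i, C i →ₗ[R] C (i + 1)) (j : ℤ) : Type _ :=
  ↥(LinearMap.ker (d (j + 1))) ⧸
    Submodule.comap (LinearMap.ker (d (j + 1))).subtype (LinearMap.range (d j))

/-- The dimension of the cohomology at the spot `j + 1` of the base change of a complex
of `A`-modules along a field-valued point `s : A → C`. -/
noncomputable def fiberCohomDim (A : Type) [CommRing A]
    (P : ℤ → Type) [∀ i, AddCommGroup (P i)] [∀ i, Module A (P i)]
    (d : ∀ i, P i →ₗ[A] P (i + 1)) (j : ℤ)
    (Cf : Type) [Field Cf] (s : A →+* Cf) : ℕ :=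
  letI := s.toAlgebra
  Module.finrank Cf (CohomologyAt (fun k => (d k).baseChange Cf) j)


section Aux
open Matrix Module

variable {K : Type*} [Field K]

/-- Extract `k` linearly independent columns from a matrix of rank `k`. -/
lemma exists_linearIndependent_cols {m n : Type*} [Fintype m] [Fintype n]
    (M : Matrix m n K) {k : ℕ} (hk : M.rank = k) :
    ∃ c : Fin k → n, LinearIndependent K (fun i => Mᵀ (c i)) := by
  classical
  obtain ⟨b, hbsub, hbspan, hbli⟩ := exists_linearIndependent K (Set.range Mᵀ)
  have hbfin : b.Finite := (Set.finite_range Mᵀ).subset hbsub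
  haveI : Fintype b := hbfin.fintype
  have hcard : Fintype.card b = k := by
    have h1 : finrank K (Submodule.span K (Set.range ((↑) : b → (m → K)))) = Fintype.card b :=
      finrank_span_eq_card hbli
    rw [Subtype.range_coe, hbspan] at h1
    rw [← h1, ← hk]; exact (Matrix.rank_eq_finrank_span_cols M).symm
  let e : Fin k ≃ b := (Fintype.equivFinOfCardEq hcard).symm
  have hc : ∀ i : Fin k, ∃ x : n, Mᵀ x = ((e i) : m → K) := fun i => hbsub (e i).2
  choose c hc using hc
  refine ⟨c, ?_⟩
  have : (fun i => Mᵀ (c i)) = ((↑) : b → (m → K)) ∘ e := by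
    funext i; simp [hc i]
  rw [this]
  exact hbli.comp e e.injective

/-- A matrix of rank `k` over a field has a `k × k` submatrix with nonzero determinant. -/
lemma exists_submatrix_det_ne_zero {m n : Type*} [Fintype m] [Fintype n]
    (M : Matrix m n K) {k : ℕ} (hk : M.rank = k) :
    ∃ (f : Fin k → m) (g : Fin k → n), (M.submatrix f g).det ≠ 0 := by
  classical
  obtain ⟨c, hc⟩ := exists_linearIndependent_cols M hk
  set N : Matrix m (Fin k) K := M.submatrix id c with hN
  have hNrank : N.rank = k := by
    have h1 : N.rank = finrank K (Submodule.span K (Set.range Nᵀ)) :=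
      Matrix.rank_eq_finrank_span_cols N
    have h2 : Set.range Nᵀ = Set.range (fun i => Mᵀ (c i)) := by
      congr 1
    rw [h1, h2, finrank_span_eq_card hc, Fintype.card_fin]
  have hNT : Nᵀ.rank = k := by rw [Matrix.rank_transpose, hNrank]
  obtain ⟨r, hr⟩ := exists_linearIndependent_cols Nᵀ hNT
  refine ⟨r, c, ?_⟩
  have hrows : LinearIndependent K (fun i => (M.submatrix r c) i) := by
    have : (fun i => (M.submatrix r c) i) = (fun i => Nᵀᵀ (r i)) := by
      funext i; rfl
    rw [this]; exact hr
  have : IsUnit (M.submatrix r c) := Matrix.linearIndependent_rows_iff_isUnit.mp hrows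
  have := (Matrix.isUnit_iff_isUnit_det _).mp this
  exact this.ne_zero

/-- A nonzero `k × k` minor gives a lower bound on the rank. -/
lemma rank_ge_of_submatrix_det_ne_zero {m n : Type*} [Fintype m] [Fintype n]
    (M : Matrix m n K) {k : ℕ} (f : Fin k → m) (g : Fin k → n)
    (h : (M.submatrix f g).det ≠ 0) : k ≤ M.rank := by
  classical
  have hS : (M.submatrix f g).rank = k := by
    rw [Matrix.rank_of_isUnit _ (((Matrix.isUnit_iff_isUnit_det _).mpr (isUnit_iff_ne_zero.mpr h))),
      Fintype.card_fin]
  have h1 : M.submatrix f g = ((1 : Matrix m m K).submatrix f _root_.id) * (M.submatrix _root_.id g) := by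
    ext i j
    simp [Matrix.mul_apply, Matrix.one_apply]
  have h2 : M.submatrix _root_.id g = M * ((1 : Matrix n n K).submatrix _root_.id g) := by
    ext i j
    simp [Matrix.mul_apply, Matrix.one_apply]
  calc k = (M.submatrix f g).rank := hS.symm
    _ ≤ (M.submatrix _root_.id g).rank := by rw [h1]; exact Matrix.rank_mul_le_right _ _
    _ ≤ M.rank := by rw [h2]; exact Matrix.rank_mul_le_left _ _

/-- Lower semicontinuity of the rank of a matrix at field-valued points. -/
lemma rank_map_semicontinuous {A : Type*} [CommRing A] {m n : Type*} [Fintype m] [Fintype n]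
    (M : Matrix m n A) (Cf : Type*) [Field Cf] (s : A →+* Cf) :
    ∃ a : A, s a ≠ 0 ∧ ∀ (Cf' : Type) [Field Cf'] (s' : A →+* Cf'), s' a ≠ 0 →
      (M.map s).rank ≤ (M.map s').rank := by
  classical
  obtain ⟨f, g, hdet⟩ := exists_submatrix_det_ne_zero (M.map s) rfl
  refine ⟨(M.submatrix f g).det, ?_, ?_⟩
  · rw [RingHom.map_det]
    exact hdet
  · intro Cf' _ s' ha
    have h : ((M.map s').submatrix f g).det ≠ 0 := by
      show (s'.mapMatrix (M.submatrix f g)).det ≠ 0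
      rw [← RingHom.map_det]
      exact ha
    exact rank_ge_of_submatrix_det_ne_zero (M.map s') f g h

/-- Dimension formula for the cohomology of a two-step complex over a field. -/
lemma cohom_dim_formula {U V W : Type*} [AddCommGroup U] [AddCommGroup V] [AddCommGroup W]
    [Module K U] [Module K V] [Module K W] [FiniteDimensional K V]
    (f : U →ₗ[K] V) (g : V →ₗ[K] W) (h : g.comp f = 0) :
    finrank K (↥(LinearMap.ker g) ⧸
        Submodule.comap (LinearMap.ker g).subtype (LinearMap.range f))
      + finrank K (LinearMap.range g) + finrank K (LinearMap.range f) = finrank K V := by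
  have hle : LinearMap.range f ≤ LinearMap.ker g := by
    rintro x ⟨y, rfl⟩
    simp [LinearMap.mem_ker, ← LinearMap.comp_apply, h]
  have h1 : finrank K (↥(LinearMap.ker g) ⧸
        Submodule.comap (LinearMap.ker g).subtype (LinearMap.range f))
      + finrank K (Submodule.comap (LinearMap.ker g).subtype (LinearMap.range f))
      = finrank K (LinearMap.ker g) :=
    Submodule.finrank_quotient_add_finrank _
  have h2 : finrank K (Submodule.comap (LinearMap.ker g).subtype (LinearMap.range f))
      = finrank K (LinearMap.range f) :=
    (Submodule.comapSubtypeEquivOfLe hle).finrank_eq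
  have h3 : finrank K (LinearMap.range g) + finrank K (LinearMap.ker g) = finrank K V :=
    LinearMap.finrank_range_add_finrank_ker g
  omega


lemma fiberCohomDim_eq (A : Type) [CommRing A]
    (P : ℤ → Type) [∀ i, AddCommGroup (P i)] [∀ i, Module A (P i)]
    (d : ∀ i, P i →ₗ[A] P (i + 1)) (hdd : ∀ i, (d (i + 1)).comp (d i) = 0) (j : ℤ)
    {ι₀ ι₁ ι₂ : Type} [Fintype ι₀] [Fintype ι₁] [Fintype ι₂]
    [DecidableEq ι₀] [DecidableEq ι₁] [DecidableEq ι₂]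
    (b₀ : Basis ι₀ A (P j)) (b₁ : Basis ι₁ A (P (j + 1))) (b₂ : Basis ι₂ A (P (j + 1 + 1)))
    (Cf : Type) [Field Cf] (s : A →+* Cf) [Module.Finite A (P (j+1))] :
    fiberCohomDim A P d j Cf s
      + ((LinearMap.toMatrix b₁ b₂ (d (j + 1))).map s).rank
      + ((LinearMap.toMatrix b₀ b₁ (d j)).map s).rank
      = Fintype.card ι₁ := by
  letI := s.toAlgebra
  have halg : algebraMap A Cf = s := RingHom.algebraMap_toAlgebra s
  have hcomp : ((d (j + 1)).baseChange Cf).comp ((d j).baseChange Cf) = 0 := by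
    rw [← LinearMap.baseChange_comp, hdd j, LinearMap.baseChange_zero]
  have key := cohom_dim_formula ((d j).baseChange Cf) ((d (j + 1)).baseChange Cf) hcomp
  have hrk : ∀ (k : ℤ) {κ κ' : Type} [Fintype κ] [Fintype κ'] [DecidableEq κ] [DecidableEq κ']
      (bd : Basis κ A (P k)) (bc : Basis κ' A (P (k + 1))),
      finrank Cf (LinearMap.range ((d k).baseChange Cf))
        = ((LinearMap.toMatrix bd bc (d k)).map s).rank := by
    intro k κ κ' _ _ _ _ bd bc
    rw [← halg, ← LinearMap.toMatrix_baseChange,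
      Matrix.rank_eq_finrank_range_toLin _ (Algebra.TensorProduct.basis Cf bc)
        (Algebra.TensorProduct.basis Cf bd), Matrix.toLin_toMatrix]
  have hV : finrank Cf (Cf ⊗[A] P (j + 1)) = Fintype.card ι₁ :=
    finrank_eq_card_basis (Algebra.TensorProduct.basis Cf b₁)
  have hdim : fiberCohomDim A P d j Cf s
      = finrank Cf (CohomologyAt (fun k => (d k).baseChange Cf) j) := rfl
  rw [hdim, ← hrk (j+1) b₁ b₂, ← hrk j b₀ b₁, ← hV]
  exact key

end Aux

/-- upper semicontinuity of fiberwise cohomological dimension.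
Let `P•` be a bounded complex of finite free `A`-modules and `s : A → C` a point with
values in a field.  If `dim_C H^i(P• ⊗_A C) ≤ r` at `s`, then there is `a ∈ A` with
`s(a) ≠ 0` such that `dim_{C'} H^i(P• ⊗_A C') ≤ r` for every field-valued point
`s' : A → C'` with `s'(a) ≠ 0`. -/
theorem statement18 (A : Type) [CommRing A]
    (P : ℤ → Type) [∀ i, AddCommGroup (P i)] [∀ i, Module A (P i)]
    [∀ i, Module.Free A (P i)] [∀ i, Module.Finite A (P i)]
    (d : ∀ i, P i →ₗ[A] P (i + 1))
    (hdd : ∀ i, (d (i + 1)).comp (d i) = 0)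
    (hbounded : ∃ N : ℕ, ∀ i : ℤ, (i < -(N : ℤ) ∨ (N : ℤ) < i) → Subsingleton (P i))
    (j : ℤ) (r : ℕ)
    (Cf : Type) [Field Cf] (s : A →+* Cf)
    (hs : fiberCohomDim A P d j Cf s ≤ r) :
    ∃ a : A, s a ≠ 0 ∧
      ∀ (Cf' : Type) [Field Cf'] (s' : A →+* Cf'), s' a ≠ 0 →
        fiberCohomDim A P d j Cf' s' ≤ r := by
  classical
  haveI : Nontrivial A := s.domain_nontrivial
  let b₀ := Module.Free.chooseBasis A (P j)
  let b₁ := Module.Free.chooseBasis A (P (j + 1))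
  let b₂ := Module.Free.chooseBasis A (P (j + 1 + 1))
  obtain ⟨a1, ha1, h1⟩ := rank_map_semicontinuous (LinearMap.toMatrix b₀ b₁ (d j)) Cf s
  obtain ⟨a2, ha2, h2⟩ := rank_map_semicontinuous (LinearMap.toMatrix b₁ b₂ (d (j + 1))) Cf s
  refine ⟨a1 * a2, by simp only [map_mul]; exact mul_ne_zero ha1 ha2, ?_⟩
  intro Cf' _ s' ha
  rw [map_mul] at ha
  have ha1' : s' a1 ≠ 0 := left_ne_zero_of_mul ha
  have ha2' : s' a2 ≠ 0 := right_ne_zero_of_mul ha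
  have e := fiberCohomDim_eq A P d hdd j b₀ b₁ b₂ Cf s
  have e' := fiberCohomDim_eq A P d hdd j b₀ b₁ b₂ Cf' s'
  have r1 := h1 Cf' s' ha1'
  have r2 := h2 Cf' s' ha2'
  omega
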